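/- Let A₁ and A₂ be (not necessarily regular) edge sets in a finite directed acyclic graph with source s such that mincut(s,A₁) < mincut(s,A₂), and let CUT_{A₁}, CUT_{A₂} be their respective primary minimum cuts. Then A₁ ≺ A₂ if and only if CUT_{A₁} ≺ CUT_{A₂}. -/

import Mathlib

open Finset

/-- Consecutive edges in the list match head-to-tail. -/
def EChain {V E : Type*} (tl hd : E → V) (p : List E) : Prop :=
  p.Chain' (fun d e => hd d = tl e)

/-- A (nonempty) directed path of edges starting at node `s`. -/
def PathFrom {V E : Type*} (tl hd : E → V) (s : V) (p : List E) : Prop :=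
  p ≠ [] ∧ EChain tl hd p ∧ ∀ e ∈ p.head?, tl e = s

/-- The directed graph is acyclic: no nonempty edge-chain returns to its start. -/
def Acyclic {V E : Type*} (tl hd : E → V) : Prop :=
  ∀ p : List E, p ≠ [] → EChain tl hd p →
    ∀ d ∈ p.head?, ∀ e ∈ p.getLast?, hd e ≠ tl d

/-- `B` separates the edge set `A` from `s`: every directed path from `s`
ending with an edge of `A` passes through an edge of `B` (i.e. `B` is a cut
between `s` and `A`). -/
def Separates {V E : Type*} (tl hd : E → V) (s : V) (A B : Finset E) : Prop :=
  ∀ p : List E, PathFrom tl hd s p → (∃ e ∈ p.getLast?, e ∈ A) → ∃ b ∈ B, b ∈ p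

/-- The minimum cut capacity between `s` and the edge set `A`. -/
noncomputable def mincut {V E : Type*} [Fintype E] (tl hd : E → V) (s : V)
    (A : Finset E) : ℕ :=
  sInf {n | ∃ B : Finset E, Separates tl hd s A B ∧ B.card = n}

/-- `B` is a minimum cut between `s` and the edge set `A`. -/
def IsMinCut {V E : Type*} [Fintype E] (tl hd : E → V) (s : V) (A B : Finset E) : Prop :=
  Separates tl hd s A B ∧ B.card = mincut tl hd s A

/-- An edge set is regular if its cardinality equals its minimum cut capacity from `s`. -/
def Regular {V E : Type*} [Fintype E] (tl hd : E → V) (s : V) (A : Finset E) : Prop :=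
  A.card = mincut tl hd s A

/-- `A ∼ A'`: the two edge sets have a common minimum cut from `s`. -/
def EquivSets {V E : Type*} [Fintype E] (tl hd : E → V) (s : V) (A A' : Finset E) : Prop :=
  ∃ C : Finset E, IsMinCut tl hd s A C ∧ IsMinCut tl hd s A' C

/-- `A₁ ≺ A₂`: `|A₁| < |A₂|` and some minimum cut between `s` and `A₂`
also separates `A₁` from `s`. -/
def Dominates {V E : Type*} [Fintype E] (tl hd : E → V) (s : V) (A₁ A₂ : Finset E) : Prop :=
  A₁.card < A₂.card ∧
    ∃ C : Finset E, IsMinCut tl hd s A₂ C ∧ Separates tl hd s A₁ C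

/-- A directed path of edges from node `s` to node `t`. -/
def NPathFromTo {V E : Type*} (tl hd : E → V) (s t : V) (p : List E) : Prop :=
  PathFrom tl hd s p ∧ ∀ e ∈ p.getLast?, hd e = t

/-- `B` is a cut between the nodes `s` and `t`. -/
def NSeparates {V E : Type*} (tl hd : E → V) (s t : V) (B : Finset E) : Prop :=
  ∀ p : List E, NPathFromTo tl hd s t p → ∃ b ∈ B, b ∈ p

/-- The minimum cut capacity between the nodes `s` and `t`. -/
noncomputable def nmincut {V E : Type*} [Fintype E] (tl hd : E → V) (s t : V) : ℕ :=
  sInf {n | ∃ B : Finset E, NSeparates tl hd s t B ∧ B.card = n}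

/-- `B` is a minimum cut between the nodes `s` and `t`. -/
def IsNodeMinCut {V E : Type*} [Fintype E] (tl hd : E → V) (s t : V) (B : Finset E) : Prop :=
  NSeparates tl hd s t B ∧ B.card = nmincut tl hd s t

/-- `d ≤ e` for edges: there is a directed path starting with `d` and ending with `e`
(in particular `d ≤ d`). -/
def EdgeLe {V E : Type*} (tl hd : E → V) (d e : E) : Prop :=
  ∃ p : List E, EChain tl hd p ∧ p.head? = some d ∧ p.getLast? = some e

/-- A family of pairwise edge-disjoint paths. -/
def EdgeDisjoint {E : Type*} {n : ℕ} (P : Fin n → List E) : Prop :=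
  ∀ i j, i ≠ j → List.Disjoint (P i) (P j)

/-- The primary minimum cut between nodes `s` and `t`: a minimum cut separating
every minimum cut between `s` and `t` from `s`. -/
def IsPrimaryNodeMinCut {V E : Type*} [Fintype E] (tl hd : E → V) (s t : V)
    (C : Finset E) : Prop :=
  IsNodeMinCut tl hd s t C ∧
    ∀ C' : Finset E, IsNodeMinCut tl hd s t C' → Separates tl hd s C' C

/-- The primary minimum cut between `s` and an edge set `A`. -/
def IsPrimaryMinCut {V E : Type*} [Fintype E] (tl hd : E → V) (s : V)
    (A C : Finset E) : Prop :=
  IsMinCut tl hd s A C ∧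
    ∀ C' : Finset E, IsMinCut tl hd s A C' → Separates tl hd s C' C

/-- The equivalence class (within the collection `𝒜`) of the wiretap set `A`
under the relation `∼`. -/
def ClassOf {V E : Type*} [Fintype E] (tl hd : E → V) (s : V)
    (𝒜 : Finset (Finset E)) (A : Finset E) : Set (Finset E) :=
  {A' | A' ∈ 𝒜 ∧ EquivSets tl hd s A A'}

/-- Domination amongst (distinct) equivalence classes: some common minimum cut of all
the sets in `C₂` separates every set in `C₁` from `s`. -/
def ClDominates {V E : Type*} [Fintype E] (tl hd : E → V) (s : V)
    (C₁ C₂ : Set (Finset E)) : Prop :=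
  C₁ ≠ C₂ ∧ ∃ CUT : Finset E,
    (∀ A ∈ C₂, IsMinCut tl hd s A CUT) ∧ (∀ A ∈ C₁, Separates tl hd s A CUT)

section AuxDev

open Classical in
/-- Edges reachable from `s` by a path avoiding `B`. -/
def reg {V E : Type*} (tl hd : E → V) (s : V) (B : Finset E) : Set E :=
  {e | ∃ p : List E, PathFrom tl hd s p ∧ p.getLast? = some e ∧ ∀ x ∈ p, x ∉ B}

/-- Boundary of a set of edges: edges outside `S` whose tail is `s` or the head of an
edge of `S`. -/
noncomputable def bdry {V E : Type*} [Fintype E] (tl hd : E → V) (s : V) (S : Set E) : Finset E :=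
  (Set.toFinite {e | e ∉ S ∧ (tl e = s ∨ ∃ d ∈ S, hd d = tl e)}).toFinset

variable {V E : Type*} [Fintype E] {tl hd : E → V} {s : V}

lemma mem_bdry {S : Set E} {e : E} :
    e ∈ bdry tl hd s S ↔ e ∉ S ∧ (tl e = s ∨ ∃ d ∈ S, hd d = tl e) := by
  simp [bdry, Set.Finite.mem_toFinset]

lemma mem_of_getLast?' {p : List E} {e : E} (h : p.getLast? = some e) : e ∈ p := by
  obtain ⟨hne, rfl⟩ := List.mem_getLast?_eq_getLast h
  exact List.getLast_mem hne

/-- Take the prefix of a path up to a given edge. -/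
lemma exists_prefix {p : List E} (hp : PathFrom tl hd s p) {e : E} (he : e ∈ p) :
    ∃ q : List E, PathFrom tl hd s q ∧ q.getLast? = some e ∧ ∀ x ∈ q, x ∈ p := by
  obtain ⟨⟨n, hn⟩, rfl⟩ := List.mem_iff_get.mp he
  refine ⟨p.take (n + 1), ⟨?_, hp.2.1.prefix (List.take_prefix _ _), ?_⟩, ?_, fun x hx =>
    (List.take_prefix _ _).subset hx⟩
  · simp only [ne_eq, List.take_eq_nil_iff]
    rintro (h | rfl)
    · exact Nat.succ_ne_zero n h
    · exact absurd hn (by simp)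
  · intro x hx
    apply hp.2.2
    rwa [List.head?_take, if_neg (Nat.succ_ne_zero n)] at hx
  · rw [List.getLast?_eq_getElem?]
    have hlen : (p.take (n + 1)).length = n + 1 := by
      rw [List.length_take]; omega
    rw [hlen]
    simp [List.getElem?_take, List.get_eq_getElem, Nat.lt_succ_self, hn]

lemma mem_reg_of_mem_path {B : Finset E} {p : List E} (hp : PathFrom tl hd s p)
    (hav : ∀ x ∈ p, x ∉ B) {e : E} (he : e ∈ p) : e ∈ reg tl hd s B := by
  obtain ⟨q, hq, hql, hqs⟩ := exists_prefix hp he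
  exact ⟨q, hq, hql, fun x hx => hav x (hqs x hx)⟩

lemma sep_iff_reg {A B : Finset E} :
    Separates tl hd s A B ↔ ∀ a ∈ A, a ∉ reg tl hd s B := by
  constructor
  · rintro h a ha ⟨p, hp, hl, hav⟩
    obtain ⟨b, hbB, hbp⟩ := h p hp ⟨a, hl, ha⟩
    exact hav b hbp hbB
  · intro h p hp hlast
    by_contra hc
    push_neg at hc
    obtain ⟨a, hl, haA⟩ := hlast
    exact h a haA ⟨p, hp, hl, fun x hx hxB => hc x hxB hx⟩

lemma not_mem_of_mem_reg {B : Finset E} {e : E} (h : e ∈ reg tl hd s B) : e ∉ B := by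
  obtain ⟨p, hp, hl, hav⟩ := h
  exact hav e (mem_of_getLast?' hl)

lemma sep_self (A : Finset E) : Separates tl hd s A A := by
  rintro p hp ⟨a, hl, ha⟩
  exact ⟨a, ha, mem_of_getLast?' hl⟩

lemma sep_trans {A B C : Finset E} (hAB : Separates tl hd s A B)
    (hBC : Separates tl hd s B C) : Separates tl hd s A C := by
  rw [sep_iff_reg]
  rintro a ha hreg
  obtain ⟨p, hp, hl, hav⟩ := hreg
  obtain ⟨b, hbB, hbp⟩ := hAB p hp ⟨a, hl, ha⟩
  exact sep_iff_reg.mp hBC b hbB (mem_reg_of_mem_path hp hav hbp)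

/-- Key structural lemma: a path avoiding the boundary of `S` stays in `S`
(given a suitable start condition). -/
lemma all_mem_of_avoid_bdry (S : Set E) :
    ∀ p : List E, EChain tl hd p →
      (∀ x ∈ p.head?, tl x = s ∨ ∃ d ∈ S, hd d = tl x) →
      (∀ x ∈ p, x ∉ bdry tl hd s S) → ∀ x ∈ p, x ∈ S := by
  intro p
  induction p with
  | nil => simp
  | cons a t ih =>
    intro hch hst hav
    have ha : a ∈ S := by
      by_contra h
      exact hav a (List.mem_cons_self (a := a) (l := t)) (mem_bdry.mpr ⟨h, hst a rfl⟩)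
    intro x hx
    rcases List.mem_cons.mp hx with rfl | hx
    · exact ha
    · refine ih hch.tail (fun y hy => Or.inr ⟨a, ha, ?_⟩)
        (fun y hy => hav y (List.mem_cons_of_mem a hy)) x hx
      exact (List.isChain_cons.mp hch).1 y hy

lemma path_mem_of_avoid_bdry {S : Set E} {p : List E} (hp : PathFrom tl hd s p)
    (hav : ∀ x ∈ p, x ∉ bdry tl hd s S) : ∀ x ∈ p, x ∈ S :=
  all_mem_of_avoid_bdry S p hp.2.1 (fun x hx => Or.inl (hp.2.2 x hx)) hav

lemma sep_bdry {A : Finset E} {S : Set E} (hA : ∀ a ∈ A, a ∉ S) :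
    Separates tl hd s A (bdry tl hd s S) := by
  rintro p hp ⟨a, hl, haA⟩
  by_contra h
  push_neg at h
  exact hA a haA (path_mem_of_avoid_bdry hp (fun x hx hxb => h x hxb hx) a
    (mem_of_getLast?' hl))

lemma bdry_reg_subset (B : Finset E) : bdry tl hd s (reg tl hd s B) ⊆ B := by
  intro e he
  rw [mem_bdry] at he
  obtain ⟨hnot, hor⟩ := he
  by_contra heB
  apply hnot
  rcases hor with h | ⟨d, hdreg, hde⟩
  · exact ⟨[e], ⟨List.cons_ne_nil e [], List.isChain_singleton e, by simp [h]⟩, rfl,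
      by simp [heB]⟩
  · obtain ⟨p, hp, hlast, hav⟩ := hdreg
    refine ⟨p ++ [e], ⟨by simp, ?_, ?_⟩, (List.getLast?_concat (l := p)), ?_⟩
    · exact List.isChain_append.mpr ⟨hp.2.1, List.isChain_singleton e, by
        intro x hx y hy
        simp only [List.head?_cons, Option.mem_def, Option.some.injEq] at hy
        rw [hlast] at hx
        simp only [Option.mem_def, Option.some.injEq] at hx
        subst hx; subst hy; exact hde⟩
    · intro x hx
      apply hp.2.2
      rcases p with _ | ⟨a, t⟩
      · exact absurd rfl hp.1
      · simpa using hx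
    · intro x hx
      rcases List.mem_append.mp hx with h | h
      · exact hav x h
      · simp only [List.mem_singleton] at h; subst h; exact heB

/-- Submodularity of boundaries. -/
lemma bdry_submod (S T : Set E) :
    (bdry tl hd s (S ∩ T)).card + (bdry tl hd s (S ∪ T)).card ≤
      (bdry tl hd s S).card + (bdry tl hd s T).card := by
  classical
  have h1 : bdry tl hd s (S ∩ T) ∪ bdry tl hd s (S ∪ T) ⊆
      bdry tl hd s S ∪ bdry tl hd s T := by
    intro e he
    rcases Finset.mem_union.mp he with he | he <;> rw [mem_bdry] at he <;>
      obtain ⟨hnot, hor⟩ := he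
    · by_cases hS : e ∈ S
      · have hT : e ∉ T := fun h => hnot ⟨hS, h⟩
        refine Finset.mem_union_right _ (mem_bdry.mpr ⟨hT, ?_⟩)
        rcases hor with h | ⟨d, hd', h⟩
        · exact Or.inl h
        · exact Or.inr ⟨d, hd'.2, h⟩
      · refine Finset.mem_union_left _ (mem_bdry.mpr ⟨hS, ?_⟩)
        rcases hor with h | ⟨d, hd', h⟩
        · exact Or.inl h
        · exact Or.inr ⟨d, hd'.1, h⟩
    · have hS : e ∉ S := fun h => hnot (Or.inl h)
      have hT : e ∉ T := fun h => hnot (Or.inr h)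
      rcases hor with h | ⟨d, hd', h⟩
      · exact Finset.mem_union_left _ (mem_bdry.mpr ⟨hS, Or.inl h⟩)
      · rcases hd' with hd' | hd'
        · exact Finset.mem_union_left _ (mem_bdry.mpr ⟨hS, Or.inr ⟨d, hd', h⟩⟩)
        · exact Finset.mem_union_right _ (mem_bdry.mpr ⟨hT, Or.inr ⟨d, hd', h⟩⟩)
  have h2 : bdry tl hd s (S ∩ T) ∩ bdry tl hd s (S ∪ T) ⊆
      bdry tl hd s S ∩ bdry tl hd s T := by
    intro e he
    rw [Finset.mem_inter, mem_bdry, mem_bdry] at he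
    obtain ⟨⟨_, hor⟩, ⟨hnotU, _⟩⟩ := he
    have hS : e ∉ S := fun h => hnotU (Or.inl h)
    have hT : e ∉ T := fun h => hnotU (Or.inr h)
    rcases hor with h | ⟨d, hd', h⟩
    · exact Finset.mem_inter.mpr ⟨mem_bdry.mpr ⟨hS, Or.inl h⟩, mem_bdry.mpr ⟨hT, Or.inl h⟩⟩
    · exact Finset.mem_inter.mpr ⟨mem_bdry.mpr ⟨hS, Or.inr ⟨d, hd'.1, h⟩⟩,
        mem_bdry.mpr ⟨hT, Or.inr ⟨d, hd'.2, h⟩⟩⟩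
  calc (bdry tl hd s (S ∩ T)).card + (bdry tl hd s (S ∪ T)).card
      = (bdry tl hd s (S ∩ T) ∪ bdry tl hd s (S ∪ T)).card +
        (bdry tl hd s (S ∩ T) ∩ bdry tl hd s (S ∪ T)).card :=
        (Finset.card_union_add_card_inter _ _).symm
    _ ≤ (bdry tl hd s S ∪ bdry tl hd s T).card + (bdry tl hd s S ∩ bdry tl hd s T).card :=
        Nat.add_le_add (Finset.card_le_card h1) (Finset.card_le_card h2)
    _ = (bdry tl hd s S).card + (bdry tl hd s T).card :=
        Finset.card_union_add_card_inter _ _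

lemma sep_univ (A : Finset E) : Separates tl hd s A Finset.univ := by
  rintro p hp -
  obtain ⟨x, hx⟩ := List.exists_mem_of_ne_nil p hp.1
  exact ⟨x, Finset.mem_univ x, hx⟩

lemma mincut_le_card {A B : Finset E} (h : Separates tl hd s A B) :
    mincut tl hd s A ≤ B.card :=
  Nat.sInf_le ⟨B, h, rfl⟩

lemma le_mincut {A : Finset E} {n : ℕ}
    (h : ∀ B : Finset E, Separates tl hd s A B → n ≤ B.card) : n ≤ mincut tl hd s A :=
  le_csInf ⟨Finset.univ.card, Finset.univ, sep_univ A, rfl⟩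
    (by rintro m ⟨B, hB, rfl⟩; exact h B hB)

end AuxDev
/-- for (not necessarily regular) edge sets with
`mincut(s,A₁) < mincut(s,A₂)`, `A₁ ≺ A₂` (some minimum cut of `A₂` separates
`A₁` from `s`) iff `CUT_{A₁} ≺ CUT_{A₂}` for their primary minimum cuts. -/
theorem dominates_iff_primary_dominates {V E : Type*} [Fintype E]
    (tl hd : E → V) (s : V)
    (hacy : Acyclic tl hd) (hsrc : ∀ e : E, hd e ≠ s)
    (A₁ A₂ : Finset E) (hlt : mincut tl hd s A₁ < mincut tl hd s A₂)
    (C₁ C₂ : Finset E)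
    (hC₁ : IsPrimaryMinCut tl hd s A₁ C₁) (hC₂ : IsPrimaryMinCut tl hd s A₂ C₂) :
    (∃ C : Finset E, IsMinCut tl hd s A₂ C ∧ Separates tl hd s A₁ C) ↔
      Dominates tl hd s C₁ C₂ := by
  obtain ⟨⟨hC₁sep, hC₁card⟩, hC₁prim⟩ := hC₁
  obtain ⟨⟨hC₂sep, hC₂card⟩, hC₂prim⟩ := hC₂
  have hmcC₂ : mincut tl hd s C₂ = mincut tl hd s A₂ := by
    refine le_antisymm (le_trans (mincut_le_card (sep_self C₂)) (le_of_eq hC₂card)) ?_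
    exact le_mincut fun B hB => hC₂card ▸ mincut_le_card (sep_trans hC₂sep hB)
  have hminC₂ : IsMinCut tl hd s C₂ C₂ := ⟨sep_self C₂, by rw [hmcC₂, hC₂card]⟩
  constructor
  · rintro ⟨C, ⟨hCsep, hCcard⟩, hCA₁⟩
    refine ⟨by rw [hC₁card, hC₂card]; exact hlt, C₂, hminC₂, ?_⟩
    -- the boundary of `reg C ∩ reg C₁` is a minimum cut of `A₂`
    set K : Set E := reg tl hd s C ∩ reg tl hd s C₁ with hK
    have hD_A₂ : Separates tl hd s A₂ (bdry tl hd s K) :=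
      sep_bdry fun a ha haK => sep_iff_reg.mp hCsep a ha haK.1
    have hU_A₁ : Separates tl hd s A₁ (bdry tl hd s (reg tl hd s C ∪ reg tl hd s C₁)) :=
      sep_bdry fun a ha h =>
        h.elim (fun h1 => sep_iff_reg.mp hCA₁ a ha h1)
          (fun h2 => sep_iff_reg.mp hC₁sep a ha h2)
    have hsubmod := bdry_submod (tl := tl) (hd := hd) (s := s)
      (reg tl hd s C) (reg tl hd s C₁)
    rw [← hK] at hsubmod
    have hcardC : (bdry tl hd s (reg tl hd s C)).card ≤ C.card :=
      Finset.card_le_card (bdry_reg_subset C)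
    have hcardC₁ : (bdry tl hd s (reg tl hd s C₁)).card ≤ C₁.card :=
      Finset.card_le_card (bdry_reg_subset C₁)
    have hUge : mincut tl hd s A₁ ≤
        (bdry tl hd s (reg tl hd s C ∪ reg tl hd s C₁)).card := mincut_le_card hU_A₁
    have hDle : (bdry tl hd s K).card ≤ mincut tl hd s A₂ := by
      have h1 : C₁.card = mincut tl hd s A₁ := hC₁card
      have h2 : C.card = mincut tl hd s A₂ := hCcard
      omega
    have hDmin : IsMinCut tl hd s A₂ (bdry tl hd s K) :=
      ⟨hD_A₂, le_antisymm hDle (mincut_le_card hD_A₂)⟩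
    have hDC₂ : Separates tl hd s (bdry tl hd s K) C₂ := hC₂prim _ hDmin
    rw [sep_iff_reg]
    rintro b hb ⟨p, hp, hl, hav⟩
    have havD : ∀ x ∈ p, x ∉ bdry tl hd s K := fun x hx hxD =>
      sep_iff_reg.mp hDC₂ x hxD (mem_reg_of_mem_path hp hav hx)
    have hbK : b ∈ K := path_mem_of_avoid_bdry hp havD b (mem_of_getLast?' hl)
    exact not_mem_of_mem_reg hbK.2 hb
  · rintro ⟨-, D, ⟨hDsep, hDcard⟩, hDC₁⟩
    exact ⟨D, ⟨sep_trans hC₂sep hDsep, by rw [hDcard, hmcC₂]⟩,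
      sep_trans hC₁sep hDC₁⟩
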